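/- Let g_1,…,g_d : [0,1] → ℝ be square-integrable with ∫_0^1 g_j(t) dt = 0 and ∫_0^1 g_j(t)² dt = 1 for each j, let μ_1,…,μ_d, τ_1,…,τ_d ∈ ℝ, and let f(x) = ∏_{j=1}^d (μ_j + τ_j g_j(x_j)). Then for every u ⊆ {1,…,d}, the lower Sobol' index of u equals τ̲²_u = ∏_{j∈u} (μ_j² + τ_j²) · ∏_{j∉u} μ_j² − ∏_{j=1}^d μ_j². -/

import Mathlib

open MeasureTheory Finset

/-- The uniform (Lebesgue) probability measure on the interval `[0,1]`. -/
noncomputable def unifSeg : Measure ℝ := (volume : Measure ℝ).restrict (Set.Icc 0 1)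

/-- The uniform (Lebesgue) product probability measure on the cube `[0,1]^d`. -/
noncomputable def unifCube (d : ℕ) : Measure (Fin d → ℝ) :=
  Measure.pi fun _ => unifSeg

/-- `glue u x y` is the point whose `j`-th coordinate is `x j` for `j ∈ u`
and `y j` otherwise, i.e. `(x_u : y_{-u})`. -/
def glue {d : ℕ} (u : Finset (Fin d)) (x y : Fin d → ℝ) : Fin d → ℝ :=
  fun j => if j ∈ u then x j else y j

/-- The lower Sobol' index `τ̲²_u` of the set `u`. -/
noncomputable def lowerSobol {d : ℕ} (f : (Fin d → ℝ) → ℝ) (u : Finset (Fin d)) : ℝ :=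
  (∫ x, (∫ y, f (glue u x y) ∂(unifCube d)) ^ 2 ∂(unifCube d))
    - (∫ x, f x ∂(unifCube d)) ^ 2

/-- The variance `σ²` of `f` over the unit cube. -/
noncomputable def sigmaSq {d : ℕ} (f : (Fin d → ℝ) → ℝ) : ℝ :=
  (∫ x, f x ^ 2 ∂(unifCube d)) - (∫ x, f x ∂(unifCube d)) ^ 2

/-- The upper Sobol' index `τ̄²_u = σ² - τ̲²_{uᶜ}` of the set `u`. -/
noncomputable def upperSobol {d : ℕ} (f : (Fin d → ℝ) → ℝ) (u : Finset (Fin d)) : ℝ :=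
  sigmaSq f - lowerSobol f uᶜ

instance : IsProbabilityMeasure unifSeg := by
  constructor
  rw [unifSeg, Measure.restrict_apply_univ, Real.volume_Icc]
  norm_num

/-- Fubini for `unifCube`. -/
lemma integral_unifCube_prod {d : ℕ} (f : Fin d → ℝ → ℝ) :
    ∫ x, ∏ i, f i (x i) ∂unifCube d = ∏ i, ∫ t, f i t ∂unifSeg := by
  letI : MeasureSpace ℝ := ⟨unifSeg⟩
  haveI : SigmaFinite (volume : Measure ℝ) := (by infer_instance : SigmaFinite unifSeg)
  exact MeasureTheory.integral_fintype_prod_eq_prod (ι := Fin d) f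

lemma prod_ite_univ {d : ℕ} (u : Finset (Fin d)) (a b : Fin d → ℝ) :
    ∏ j, (if j ∈ u then a j else b j) = (∏ j ∈ u, a j) * ∏ j ∈ uᶜ, b j := by
  have h1 : Finset.univ.filter (· ∈ u) = u := by ext j; simp
  have h2 : Finset.univ.filter (fun j => ¬ j ∈ u) = uᶜ := by ext j; simp
  rw [← Finset.prod_filter_mul_prod_filter_not Finset.univ (· ∈ u), h1, h2]
  congr 1
  · exact Finset.prod_congr rfl fun j hj => if_pos hj
  · exact Finset.prod_congr rfl fun j hj => if_neg (by simpa using hj)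

theorem stmt14 {d : ℕ} (hd : 1 ≤ d) (g : Fin d → ℝ → ℝ)
    (hg : ∀ j, MemLp (g j) 2 unifSeg)
    (hg0 : ∀ j, ∫ t, g j t ∂unifSeg = 0)
    (hg1 : ∀ j, ∫ t, g j t ^ 2 ∂unifSeg = 1)
    (μ τ : Fin d → ℝ) (u : Finset (Fin d)) :
    lowerSobol (fun x => ∏ j, (μ j + τ j * g j (x j))) u
      = (∏ j ∈ u, (μ j ^ 2 + τ j ^ 2)) * (∏ j ∈ uᶜ, μ j ^ 2) - ∏ j, μ j ^ 2 := by
  have hgi : ∀ j, Integrable (g j) unifSeg :=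
    fun j => (hg j).integrable (by norm_num)
  have hgsq : ∀ j, Integrable (fun t => g j t ^ 2) unifSeg :=
    fun j => (hg j).integrable_sq
  -- first moments
  have int1 : ∀ j, ∫ t, (μ j + τ j * g j t) ∂unifSeg = μ j := by
    intro j
    rw [integral_add (integrable_const _) ((hgi j).const_mul _),
      integral_const_mul, hg0 j]
    simp
  have int2 : ∀ j, ∫ t, (μ j + τ j * g j t) ^ 2 ∂unifSeg = μ j ^ 2 + τ j ^ 2 := by
    intro j
    have heq : (fun t => (μ j + τ j * g j t) ^ 2)
        = fun t => (μ j ^ 2) + ((2 * μ j * τ j) * g j t + (τ j ^ 2) * (g j t ^ 2)) := by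
      funext t; ring
    have hB : Integrable (fun t => 2 * μ j * τ j * g j t + τ j ^ 2 * g j t ^ 2) unifSeg :=
      ((hgi j).const_mul _).add ((hgsq j).const_mul _)
    rw [heq, integral_add (integrable_const _) hB,
      integral_add ((hgi j).const_mul _) ((hgsq j).const_mul _),
      integral_const_mul, integral_const_mul, hg0 j, hg1 j]
    simp
  -- mean of f
  have hmean : (∫ x, ∏ j, (μ j + τ j * g j (x j)) ∂unifCube d) = ∏ j, μ j := by
    rw [integral_unifCube_prod fun j t => μ j + τ j * g j t]
    exact Finset.prod_congr rfl fun j _ => int1 j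
  -- inner integral
  have hinner : ∀ x : Fin d → ℝ, (∫ y, ∏ j, (μ j + τ j * g j (glue u x y j)) ∂unifCube d)
      = (∏ j ∈ u, (μ j + τ j * g j (x j))) * ∏ j ∈ uᶜ, μ j := by
    intro x
    have h1 : ∀ y : Fin d → ℝ, (∏ j, (μ j + τ j * g j (glue u x y j)))
        = ∏ j, (fun t => if j ∈ u then μ j + τ j * g j (x j) else μ j + τ j * g j t) (y j) := by
      intro y
      refine Finset.prod_congr rfl fun j _ => ?_
      simp only [glue]
      split <;> rfl
    have key : (∫ y, ∏ j, (μ j + τ j * g j (glue u x y j)) ∂unifCube d)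
        = ∏ j, ∫ t, (fun t => if j ∈ u then μ j + τ j * g j (x j)
            else μ j + τ j * g j t) t ∂unifSeg :=
      (integral_congr_ae (Filter.Eventually.of_forall h1)).trans
        (integral_unifCube_prod
          (fun j t => if j ∈ u then μ j + τ j * g j (x j) else μ j + τ j * g j t))
    rw [key]
    have h2 : ∀ j ∈ Finset.univ, (∫ t, (if j ∈ u then μ j + τ j * g j (x j)
          else μ j + τ j * g j t) ∂unifSeg)
        = (if j ∈ u then μ j + τ j * g j (x j) else μ j) := by
      intro j _
      by_cases hj : j ∈ u
      · simp [hj]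
      · simp only [hj, if_false]; exact int1 j
    rw [Finset.prod_congr rfl h2, prod_ite_univ]
  simp only [lowerSobol]
  simp_rw [hinner, hmean]
  have hsq : ∀ x : Fin d → ℝ, ((∏ j ∈ u, (μ j + τ j * g j (x j))) * ∏ j ∈ uᶜ, μ j) ^ 2
      = (∏ j, (fun t => if j ∈ u then (μ j + τ j * g j t) ^ 2 else 1) (x j))
        * (∏ j ∈ uᶜ, μ j) ^ 2 := by
    intro x
    rw [mul_pow]
    congr 1
    rw [prod_ite_univ u (fun j => (μ j + τ j * g j (x j)) ^ 2) (fun _ => 1),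
      Finset.prod_const_one, mul_one, ← Finset.prod_pow]
  have houter : (∫ x, ((∏ j ∈ u, (μ j + τ j * g j (x j))) * ∏ j ∈ uᶜ, μ j) ^ 2 ∂unifCube d)
      = (∏ j, ∫ t, (fun t => if j ∈ u then (μ j + τ j * g j t) ^ 2 else 1) t ∂unifSeg)
        * (∏ j ∈ uᶜ, μ j) ^ 2 := by
    calc (∫ x, ((∏ j ∈ u, (μ j + τ j * g j (x j))) * ∏ j ∈ uᶜ, μ j) ^ 2 ∂unifCube d)
        = ∫ x, (∏ j, (fun t => if j ∈ u then (μ j + τ j * g j t) ^ 2 else 1) (x j))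
            * (∏ j ∈ uᶜ, μ j) ^ 2 ∂unifCube d :=
          integral_congr_ae (Filter.Eventually.of_forall hsq)
      _ = (∫ x, ∏ j, (fun t => if j ∈ u then (μ j + τ j * g j t) ^ 2 else 1) (x j) ∂unifCube d)
            * (∏ j ∈ uᶜ, μ j) ^ 2 := integral_mul_const _ _
      _ = _ := by
            congr 1
            exact integral_unifCube_prod
              (fun j t => if j ∈ u then (μ j + τ j * g j t) ^ 2 else 1)
  rw [houter]
  have h3 : ∀ j ∈ Finset.univ, (∫ t, (if j ∈ u then (μ j + τ j * g j t) ^ 2 else 1) ∂unifSeg)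
      = (if j ∈ u then μ j ^ 2 + τ j ^ 2 else 1) := by
    intro j _
    by_cases hj : j ∈ u
    · simp only [hj, if_true]; exact int2 j
    · simp [hj]
  rw [Finset.prod_congr rfl h3, prod_ite_univ, Finset.prod_const_one, mul_one,
    ← Finset.prod_pow, ← Finset.prod_pow]
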